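/- As λ → 0⁺, the coefficient κ_λ = ∫_{T^d} (∂_1 ω²(ξ)/ω(ξ))² (Φ(ξ) + λ)^{−1} dξ converges (monotonically increasing) to the finite limit ∫_{T^d} (∂_1 ω²(ξ))²/(ω²(ξ) Φ(ξ)) dξ, provided ν > 0 or d ≥ 3. -/

import Mathlib

open Real MeasureTheory Filter
open scoped Topology

/-- Scattering rate: `Φ(k) = 8 Σ_j sin²(π k_j)` for `d ≥ 2`, and
`Φ(k) = (4/3) sin²(πk)(1 + 2cos²(πk))` for `d = 1`. -/
noncomputable def PhiRate (d : ℕ) (k : Fin d → ℝ) : ℝ :=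
  if h : d = 1 then
    (4 / 3) * Real.sin (π * k (Fin.cast h.symm 0)) ^ 2 *
      (1 + 2 * Real.cos (π * k (Fin.cast h.symm 0)) ^ 2)
  else 8 * ∑ m : Fin d, Real.sin (π * k m) ^ 2

/-- The unit cube `[0,1)^d`, representing the torus `T^d`. -/
def unitBox (d : ℕ) : Set (Fin d → ℝ) := Set.pi Set.univ fun _ => Set.Ico 0 1

/-- `ω²(ξ) = ν + 4α Σ_j sin²(π ξ_j)`. -/
noncomputable def omegaSq (d : ℕ) (α ν : ℝ) (ξ : Fin d → ℝ) : ℝ :=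
  ν + 4 * α * ∑ j : Fin d, Real.sin (π * ξ j) ^ 2

/-- `κ_λ = ∫_{T^d} (∂₁ω²(ξ))²/(ω²(ξ)(Φ(ξ)+λ)) dξ`, with `∂₁ω²(ξ) = 4πα sin(2πξ₁)`. -/
noncomputable def kappaLam (d : ℕ) (hd : 0 < d) (α ν : ℝ) (lam : ℝ) : ℝ :=
  ∫ ξ in unitBox d,
    (4 * π * α * Real.sin (2 * π * ξ ⟨0, hd⟩)) ^ 2 /
      (omegaSq d α ν ξ * (PhiRate d ξ + lam))

namespace KappaAux

lemma sinPiPos {t : ℝ} (h0 : 0 < t) (h1 : t < 1) : 0 < Real.sin (π * t) :=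
  Real.sin_pos_of_pos_of_lt_pi (by positivity)
    (by nlinarith [Real.pi_pos])

lemma twoMulLeSinPi {t : ℝ} (h0 : 0 ≤ t) (h1 : t ≤ 1 / 2) : 2 * t ≤ Real.sin (π * t) := by
  have h := Real.mul_le_sin (x := π * t) (by positivity) (by nlinarith [Real.pi_pos])
  have hπ : (0:ℝ) < π := Real.pi_pos
  calc 2 * t = 2 / π * (π * t) := by field_simp
  _ ≤ Real.sin (π * t) := h

/-- 1D integrability of `sin(πt)^(-2/3)` on `[0,1)`. -/
lemma aux1d : IntegrableOn (fun t : ℝ => Real.sin (π * t) ^ (-(2/3) : ℝ))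
    (Set.Ico (0:ℝ) 1) volume := by
  have hmeas : Measurable fun t : ℝ => Real.sin (π * t) ^ (-(2/3) : ℝ) :=
    (Real.measurable_sin.comp (measurable_const.mul measurable_id)).pow measurable_const
  have h12 : Set.Ico (0:ℝ) (1/2) ∪ Set.Ico (1/2:ℝ) 1 = Set.Ico (0:ℝ) 1 :=
    Set.Ico_union_Ico_eq_Ico (by norm_num) (by norm_num)
  rw [← h12]
  apply IntegrableOn.union
  · rw [integrableOn_Ico_iff_integrableOn_Ioo]
    refine Integrable.mono' (g := fun t : ℝ => t ^ (-(2/3) : ℝ)) ?_ hmeas.aestronglyMeasurable ?_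
    · have h0 : IntervalIntegrable (fun t : ℝ => t ^ (-(2/3) : ℝ)) volume 0 (1/2) :=
        intervalIntegral.intervalIntegrable_rpow' (by norm_num)
      exact (intervalIntegrable_iff_integrableOn_Ioo_of_le (by norm_num)).mp h0
    · rw [ae_restrict_iff' measurableSet_Ioo]
      refine Filter.Eventually.of_forall fun t ht => ?_
      have h1 : 0 < t := ht.1
      have h2 : t ≤ Real.sin (π * t) := by
        have := twoMulLeSinPi h1.le (le_of_lt ht.2)
        linarith
      rw [Real.norm_of_nonneg (Real.rpow_nonneg (by linarith) _)]
      exact Real.rpow_le_rpow_of_nonpos h1 h2 (by norm_num)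
  · rw [integrableOn_Ico_iff_integrableOn_Ioo]
    refine Integrable.mono' (g := fun t : ℝ => (1 - t) ^ (-(2/3) : ℝ)) ?_
      hmeas.aestronglyMeasurable ?_
    · have h0 : IntervalIntegrable (fun t : ℝ => t ^ (-(2/3) : ℝ)) volume 0 (1/2) :=
        intervalIntegral.intervalIntegrable_rpow' (by norm_num)
      have h1 : IntervalIntegrable (fun t : ℝ => (1 - t) ^ (-(2/3) : ℝ)) volume (1 - 1/2) (1 - 0) :=
        (IntervalIntegrable.comp_sub_left h0 1).symm
      norm_num at h1
      exact (intervalIntegrable_iff_integrableOn_Ioo_of_le (by norm_num)).mp h1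
    · rw [ae_restrict_iff' measurableSet_Ioo]
      refine Filter.Eventually.of_forall fun t ht => ?_
      have h1 : 0 < 1 - t := by linarith [ht.2]
      have h2 : 1 - t ≤ Real.sin (π * t) := by
        have hs : Real.sin (π * t) = Real.sin (π * (1 - t)) := by
          rw [show π * (1 - t) = π - π * t by ring, Real.sin_pi_sub]
        rw [hs]
        have := twoMulLeSinPi h1.le (by linarith [ht.1])
        linarith
      rw [Real.norm_of_nonneg (Real.rpow_nonneg (by linarith) _)]
      exact Real.rpow_le_rpow_of_nonpos h1 h2 (by norm_num)

lemma continuous_phiRate (d : ℕ) : Continuous (PhiRate d) := by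
  rcases eq_or_ne d 1 with h | h
  · subst h
    unfold PhiRate
    simp only [dif_pos]
    fun_prop
  · unfold PhiRate
    simp only [dif_neg h]
    fun_prop

lemma continuous_omegaSq (d : ℕ) (α ν : ℝ) : Continuous (omegaSq d α ν) := by
  unfold omegaSq; fun_prop

lemma measurableSet_unitBox (d : ℕ) : MeasurableSet (unitBox d) :=
  MeasurableSet.univ_pi fun _ => measurableSet_Ico

lemma volume_unitBox (d : ℕ) : volume (unitBox d) = 1 := by
  rw [unitBox, volume_pi_pi]
  simp

lemma mem_unitBox {d : ℕ} {ξ : Fin d → ℝ} (hξ : ξ ∈ unitBox d) (j : Fin d) :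
    ξ j ∈ Set.Ico (0:ℝ) 1 := hξ j (Set.mem_univ j)

lemma ae_unitBox (d : ℕ) :
    ∀ᵐ ξ ∂(volume.restrict (unitBox d)), ξ ∈ unitBox d ∧ ∀ j, 0 < Real.sin (π * ξ j) := by
  have h2 : ∀ᵐ ξ : Fin d → ℝ ∂volume, ∀ j, ξ j ≠ 0 := by
    rw [ae_all_iff]
    intro j
    rw [volume_pi]
    exact MeasureTheory.Measure.ae_eval_ne _ j 0
  filter_upwards [ae_restrict_mem (measurableSet_unitBox d), ae_restrict_of_ae h2] with ξ hbox hne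
  refine ⟨hbox, fun j => ?_⟩
  have hj := mem_unitBox hbox j
  exact sinPiPos (lt_of_le_of_ne hj.1 (Ne.symm (hne j))) hj.2

lemma phiRate_eq {d : ℕ} (h : d ≠ 1) (ξ : Fin d → ℝ) :
    PhiRate d ξ = 8 * ∑ m : Fin d, Real.sin (π * ξ m) ^ 2 := by
  unfold PhiRate; rw [dif_neg h]

lemma phiRate_ge (d : ℕ) (hd : 0 < d) (ξ : Fin d → ℝ) :
    4 / 3 * Real.sin (π * ξ ⟨0, hd⟩) ^ 2 ≤ PhiRate d ξ := by
  rcases eq_or_ne d 1 with h | h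
  · subst h
    unfold PhiRate
    simp only [dif_pos]
    have he : (Fin.cast rfl 0 : Fin 1) = ⟨0, hd⟩ := Subsingleton.elim _ _
    rw [he]
    nlinarith [sq_nonneg (Real.sin (π * ξ ⟨0, hd⟩)), sq_nonneg (Real.cos (π * ξ ⟨0, hd⟩)),
      sq_nonneg (Real.sin (π * ξ ⟨0, hd⟩) * Real.cos (π * ξ ⟨0, hd⟩))]
  · rw [phiRate_eq h]
    have h1 : Real.sin (π * ξ ⟨0, hd⟩) ^ 2 ≤ ∑ m : Fin d, Real.sin (π * ξ m) ^ 2 :=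
      Finset.single_le_sum (f := fun m => Real.sin (π * ξ m) ^ 2) (fun m _ => sq_nonneg _) (Finset.mem_univ (⟨0, hd⟩ : Fin d))
    nlinarith [sq_nonneg (Real.sin (π * ξ ⟨0, hd⟩))]

lemma phiRate_pos {d : ℕ} (hd : 0 < d) {ξ : Fin d → ℝ}
    (hsin : ∀ j, 0 < Real.sin (π * ξ j)) : 0 < PhiRate d ξ := by
  rcases eq_or_ne d 1 with h | h
  · subst h
    unfold PhiRate
    simp only [dif_pos]
    have h1 := hsin (Fin.cast rfl 0)
    nlinarith [sq_nonneg (Real.cos (π * ξ (Fin.cast rfl 0)))]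
  · rw [phiRate_eq h]
    have hS : 0 < ∑ m : Fin d, Real.sin (π * ξ m) ^ 2 :=
      Finset.sum_pos (fun m _ => pow_pos (hsin m) 2) ⟨⟨0, hd⟩, Finset.mem_univ _⟩
    linarith

lemma sum_pos' {d : ℕ} (hd : 0 < d) {ξ : Fin d → ℝ}
    (hsin : ∀ j, 0 < Real.sin (π * ξ j)) : 0 < ∑ m : Fin d, Real.sin (π * ξ m) ^ 2 :=
  Finset.sum_pos (fun m _ => pow_pos (hsin m) 2) ⟨⟨0, hd⟩, Finset.mem_univ _⟩

lemma omegaSq_pos {d : ℕ} (hd : 0 < d) {α ν : ℝ} (hα : 0 < α) (hν : 0 ≤ ν) {ξ : Fin d → ℝ}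
    (hsin : ∀ j, 0 < Real.sin (π * ξ j)) : 0 < omegaSq d α ν ξ := by
  have hS := sum_pos' hd hsin
  unfold omegaSq
  nlinarith

lemma numer_le (d : ℕ) (hd : 0 < d) (α : ℝ) (ξ : Fin d → ℝ) :
    (4 * π * α * Real.sin (2 * π * ξ ⟨0, hd⟩)) ^ 2
      ≤ 64 * π ^ 2 * α ^ 2 * Real.sin (π * ξ ⟨0, hd⟩) ^ 2 := by
  rw [show 2 * π * ξ ⟨0, hd⟩ = 2 * (π * ξ ⟨0, hd⟩) by ring, Real.sin_two_mul]
  nlinarith [Real.cos_sq_le_one (π * ξ ⟨0, hd⟩),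
    sq_nonneg (π * α * Real.sin (π * ξ ⟨0, hd⟩)),
    sq_nonneg (π * α * Real.sin (π * ξ ⟨0, hd⟩) * Real.cos (π * ξ ⟨0, hd⟩))]

end KappaAux

namespace KappaAux

noncomputable def kInteg (d : ℕ) (hd : 0 < d) (α ν lam : ℝ) (ξ : Fin d → ℝ) : ℝ :=
  (4 * π * α * Real.sin (2 * π * ξ ⟨0, hd⟩)) ^ 2 /
    (omegaSq d α ν ξ * (PhiRate d ξ + lam))

lemma measurable_kInteg (d : ℕ) (hd : 0 < d) (α ν lam : ℝ) :
    Measurable (kInteg d hd α ν lam) := by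
  unfold kInteg
  apply Measurable.div
  · fun_prop
  · exact ((continuous_omegaSq d α ν).measurable).mul
      (((continuous_phiRate d).measurable).add_const lam)

lemma kInteg_nonneg {d : ℕ} (hd : 0 < d) {α ν : ℝ} (hα : 0 < α) (hν : 0 ≤ ν)
    {lam : ℝ} (hlam : 0 ≤ lam) {ξ : Fin d → ℝ} (hsin : ∀ j, 0 < Real.sin (π * ξ j)) :
    0 ≤ kInteg d hd α ν lam ξ := by
  have hω := omegaSq_pos hd hα hν hsin
  have hΦ := phiRate_pos hd hsin
  unfold kInteg
  have : 0 < omegaSq d α ν ξ * (PhiRate d ξ + lam) := mul_pos hω (by linarith)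
  positivity

lemma kInteg_mono {d : ℕ} (hd : 0 < d) {α ν : ℝ} (hα : 0 < α) (hν : 0 ≤ ν)
    {a b : ℝ} (ha : 0 ≤ a) (hab : a ≤ b) {ξ : Fin d → ℝ}
    (hsin : ∀ j, 0 < Real.sin (π * ξ j)) :
    kInteg d hd α ν b ξ ≤ kInteg d hd α ν a ξ := by
  have hω := omegaSq_pos hd hα hν hsin
  have hΦ := phiRate_pos hd hsin
  unfold kInteg
  have h1 : 0 < omegaSq d α ν ξ * (PhiRate d ξ + a) := mul_pos hω (by linarith)
  have h2 : omegaSq d α ν ξ * (PhiRate d ξ + a) ≤ omegaSq d α ν ξ * (PhiRate d ξ + b) := by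
    nlinarith
  exact div_le_div₀ (sq_nonneg _) le_rfl h1 h2

set_option maxHeartbeats 1000000 in
/-- Main integrability lemma. -/
lemma kInteg_integrable0 (d : ℕ) (hd : 0 < d) (α ν : ℝ) (hα : 0 < α) (hν : 0 ≤ ν)
    (h : 0 < ν ∨ 3 ≤ d) :
    Integrable (kInteg d hd α ν 0) (volume.restrict (unitBox d)) := by
  have hπ := Real.pi_pos
  rcases h with hν' | hd3
  · -- ν > 0 : bounded by a constant
    have hconst : Integrable (fun _ : Fin d → ℝ => (48 * π ^ 2 * α ^ 2 / ν : ℝ))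
        (volume.restrict (unitBox d)) := by
      refine (integrableOn_const_iff).mpr (Or.inr ?_)
      rw [volume_unitBox]; exact ENNReal.one_lt_top
    refine hconst.mono' (measurable_kInteg d hd α ν 0).aestronglyMeasurable ?_
    filter_upwards [ae_unitBox d] with ξ hξ
    obtain ⟨hbox, hsin⟩ := hξ
    have hω := omegaSq_pos hd hα hν hsin
    have hΦ := phiRate_pos hd hsin
    have hD : 0 < omegaSq d α ν ξ * (PhiRate d ξ + 0) := by
      rw [add_zero]; exact mul_pos hω hΦ
    rw [Real.norm_of_nonneg (kInteg_nonneg hd hα hν le_rfl hsin)]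
    unfold kInteg
    rw [div_le_iff₀ hD]
    have h1 := numer_le d hd α ξ
    have h2 := phiRate_ge d hd ξ
    have h3 : ν ≤ omegaSq d α ν ξ := by
      have hS := (sum_pos' hd hsin).le
      unfold omegaSq; nlinarith
    calc (4 * π * α * Real.sin (2 * π * ξ ⟨0, hd⟩)) ^ 2
        ≤ 64 * π ^ 2 * α ^ 2 * Real.sin (π * ξ ⟨0, hd⟩) ^ 2 := h1
      _ = 48 * π ^ 2 * α ^ 2 / ν * (ν * (4 / 3 * Real.sin (π * ξ ⟨0, hd⟩) ^ 2)) := by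
          field_simp; ring
      _ ≤ 48 * π ^ 2 * α ^ 2 / ν * (omegaSq d α ν ξ * (PhiRate d ξ + 0)) := by
          rw [add_zero]
          refine mul_le_mul_of_nonneg_left ?_ (by positivity)
          exact mul_le_mul h3 h2 (by positivity) hω.le
  · -- d ≥ 3
    have hd1 : d ≠ 1 := by omega
    have hi1 : 1 < d := by omega
    have hi2 : 2 < d := by omega
    set i0 : Fin d := ⟨0, hd⟩ with hi0def
    set i1 : Fin d := ⟨1, hi1⟩ with hi1def
    set i2 : Fin d := ⟨2, hi2⟩ with hi2def
    set b : Fin d → ℝ → ℝ := fun j t =>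
      Set.indicator (Set.Ico (0:ℝ) 1)
        (fun t => if (j : ℕ) < 3 then Real.sin (π * t) ^ (-(2/3) : ℝ) else 1) t with hbdef
    have hbint : ∀ j, Integrable (b j) volume := by
      intro j
      rw [hbdef]
      rw [integrable_indicator_iff measurableSet_Ico]
      by_cases hj : (j : ℕ) < 3
      · simp only [hj, if_true]
        exact aux1d
      · simp only [hj, if_false]
        refine (integrableOn_const_iff).mpr (Or.inr ?_)
        rw [Real.volume_Ico]; norm_num
    have hBint : Integrable (fun ξ : Fin d → ℝ => π ^ 2 * α * ∏ j, b j (ξ j))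
        (volume.restrict (unitBox d)) :=
      ((Integrable.fintype_prod (f := b) hbint).const_mul _).integrableOn
    refine hBint.mono' (measurable_kInteg d hd α ν 0).aestronglyMeasurable ?_
    filter_upwards [ae_unitBox d] with ξ hξ
    obtain ⟨hbox, hsin⟩ := hξ
    have hω := omegaSq_pos hd hα hν hsin
    have hΦ := phiRate_pos hd hsin
    have hS := sum_pos' hd hsin
    rw [Real.norm_of_nonneg (kInteg_nonneg hd hα hν le_rfl hsin)]
    -- compute the product
    have hbval : ∀ j, b j (ξ j) =
        if (j : ℕ) < 3 then Real.sin (π * ξ j) ^ (-(2/3) : ℝ) else 1 := fun j =>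
      Set.indicator_of_mem (mem_unitBox hbox j) _
    have hfil : Finset.univ.filter (fun j : Fin d => (j : ℕ) < 3) = {i0, i1, i2} := by
      ext j
      simp only [Finset.mem_filter, Finset.mem_univ, true_and, Finset.mem_insert,
        Finset.mem_singleton, hi0def, hi1def, hi2def, Fin.ext_iff]
      omega
    have hne01 : i0 ≠ i1 := by simp [hi0def, hi1def, Fin.ext_iff]
    have hne02 : i0 ≠ i2 := by simp [hi0def, hi2def, Fin.ext_iff]
    have hne12 : i1 ≠ i2 := by simp [hi1def, hi2def, Fin.ext_iff]
    have hprod : (∏ j, b j (ξ j)) =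
        Real.sin (π * ξ i0) ^ (-(2/3) : ℝ) *
          (Real.sin (π * ξ i1) ^ (-(2/3) : ℝ) * Real.sin (π * ξ i2) ^ (-(2/3) : ℝ)) := by
      rw [Finset.prod_congr rfl fun j _ => hbval j, ← Finset.prod_filter, hfil,
        Finset.prod_insert (by simp [hne01, hne02]),
        Finset.prod_insert (by simp [hne12]), Finset.prod_singleton]
    rw [hprod]
    -- AM-GM
    have hpow : ∀ j : Fin d, (Real.sin (π * ξ j) ^ 2 : ℝ) ^ ((1:ℝ)/3)
        = Real.sin (π * ξ j) ^ ((2:ℝ)/3) := by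
      intro j
      rw [← Real.rpow_natCast (Real.sin (π * ξ j)) 2, ← Real.rpow_mul (hsin j).le]
      norm_num
    have hamgm := Real.geom_mean_le_arith_mean3_weighted
      (by norm_num : (0:ℝ) ≤ 1/3) (by norm_num : (0:ℝ) ≤ 1/3) (by norm_num : (0:ℝ) ≤ 1/3)
      (sq_nonneg (Real.sin (π * ξ i0))) (sq_nonneg (Real.sin (π * ξ i1)))
      (sq_nonneg (Real.sin (π * ξ i2))) (by norm_num)
    rw [hpow i0, hpow i1, hpow i2] at hamgm
    set P : ℝ := Real.sin (π * ξ i0) ^ ((2:ℝ)/3) *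
      (Real.sin (π * ξ i1) ^ ((2:ℝ)/3) * Real.sin (π * ξ i2) ^ ((2:ℝ)/3)) with hPdef
    have hPpos : 0 < P := by
      have := Real.rpow_pos_of_pos (hsin i0) ((2:ℝ)/3)
      have := Real.rpow_pos_of_pos (hsin i1) ((2:ℝ)/3)
      have := Real.rpow_pos_of_pos (hsin i2) ((2:ℝ)/3)
      rw [hPdef]; positivity
    have hA_le : Real.sin (π * ξ i0) ^ 2 + Real.sin (π * ξ i1) ^ 2 + Real.sin (π * ξ i2) ^ 2
        ≤ ∑ m : Fin d, Real.sin (π * ξ m) ^ 2 := by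
      have hsub := Finset.sum_le_sum_of_subset_of_nonneg
        (f := fun m : Fin d => Real.sin (π * ξ m) ^ 2)
        (Finset.subset_univ ({i0, i1, i2} : Finset (Fin d)))
        (fun m _ _ => sq_nonneg _)
      rwa [Finset.sum_insert (by simp [hne01, hne02]),
        Finset.sum_insert (by simp [hne12]), Finset.sum_singleton, ← add_assoc] at hsub
    have h3P : 3 * P ≤ ∑ m : Fin d, Real.sin (π * ξ m) ^ 2 := by
      have : P ≤ 1/3 * Real.sin (π * ξ i0) ^ 2 + 1/3 * Real.sin (π * ξ i1) ^ 2
          + 1/3 * Real.sin (π * ξ i2) ^ 2 := by rw [hPdef, ← mul_assoc]; exact hamgm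
      linarith
    -- rewrite negative powers as inverse of P
    have hinv : Real.sin (π * ξ i0) ^ (-(2/3) : ℝ) *
        (Real.sin (π * ξ i1) ^ (-(2/3) : ℝ) * Real.sin (π * ξ i2) ^ (-(2/3) : ℝ)) = P⁻¹ := by
      rw [hPdef]
      rw [show (-(2/3) : ℝ) = -((2:ℝ)/3) by norm_num]
      rw [Real.rpow_neg (hsin i0).le, Real.rpow_neg (hsin i1).le, Real.rpow_neg (hsin i2).le,
        ← mul_inv, ← mul_inv]
    rw [hinv]
    -- final chain
    set S : ℝ := ∑ m : Fin d, Real.sin (π * ξ m) ^ 2 with hSdef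
    have hωge : 4 * α * S ≤ omegaSq d α ν ξ := by
      rw [omegaSq, ← hSdef]; linarith
    have hΦeq : PhiRate d ξ = 8 * S := by rw [phiRate_eq hd1, ← hSdef]
    have hDge : 32 * α * S ^ 2 ≤ omegaSq d α ν ξ * (PhiRate d ξ + 0) := by
      rw [add_zero, hΦeq]
      nlinarith
    have hs0S : Real.sin (π * ξ i0) ^ 2 ≤ S := by
      rw [hSdef]
      exact Finset.single_le_sum (f := fun m : Fin d => Real.sin (π * ξ m) ^ 2)
        (fun m _ => sq_nonneg _) (Finset.mem_univ i0)
    unfold kInteg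
    have h32 : (0:ℝ) < 32 * α * S ^ 2 :=
      mul_pos (mul_pos (by norm_num) hα) (pow_pos hS 2)
    have hCpos : (0:ℝ) < 2 * π ^ 2 * α :=
      mul_pos (mul_pos (by norm_num) (pow_pos hπ 2)) hα
    have hnum_le : (4 * π * α * Real.sin (2 * π * ξ i0)) ^ 2 ≤ 64 * π ^ 2 * α ^ 2 * S :=
      (numer_le d hd α ξ).trans (mul_le_mul_of_nonneg_left hs0S (by positivity))
    have hnumS_nn : (0:ℝ) ≤ 64 * π ^ 2 * α ^ 2 * S := mul_nonneg (by positivity) hS.le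
    have hPinv : 0 < P⁻¹ := inv_pos.mpr hPpos
    calc (4 * π * α * Real.sin (2 * π * ξ i0)) ^ 2 /
          (omegaSq d α ν ξ * (PhiRate d ξ + 0))
        ≤ 64 * π ^ 2 * α ^ 2 * S / (32 * α * S ^ 2) :=
          div_le_div₀ hnumS_nn hnum_le h32 hDge
      _ = 2 * π ^ 2 * α / S := by
          rw [div_eq_div_iff h32.ne' hS.ne']
          ring
      _ ≤ 2 * π ^ 2 * α / (3 * P) :=
          div_le_div_of_nonneg_left hCpos.le (by linarith) h3P
      _ ≤ π ^ 2 * α * P⁻¹ := by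
          rw [div_eq_mul_inv, mul_inv]
          nlinarith [mul_pos (mul_pos (pow_pos hπ 2) hα) hPinv]

end KappaAux

open KappaAux

/-- Provided `ν > 0` or `d ≥ 3`, as `λ → 0⁺` the coefficient `κ_λ` increases
monotonically to the finite limit `∫_{T^d} (∂₁ω²)²/(ω² Φ) dξ`. -/
theorem kappa_lambda_limit (d : ℕ) (hd : 0 < d) (α ν : ℝ)
    (hα : 0 < α) (hν : 0 ≤ ν) (h : 0 < ν ∨ 3 ≤ d) :
    IntegrableOn
      (fun ξ : Fin d → ℝ =>
        (4 * π * α * Real.sin (2 * π * ξ ⟨0, hd⟩)) ^ 2 /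
          (omegaSq d α ν ξ * PhiRate d ξ)) (unitBox d) volume ∧
    AntitoneOn (kappaLam d hd α ν) (Set.Ioi 0) ∧
    Tendsto (kappaLam d hd α ν) (𝓝[>] 0)
      (𝓝 (∫ ξ in unitBox d,
        (4 * π * α * Real.sin (2 * π * ξ ⟨0, hd⟩)) ^ 2 /
          (omegaSq d α ν ξ * PhiRate d ξ))) := by

  have hg0 := kInteg_integrable0 d hd α ν hα hν h
  have hfun : (fun ξ : Fin d → ℝ =>
      (4 * π * α * Real.sin (2 * π * ξ ⟨0, hd⟩)) ^ 2 /
        (omegaSq d α ν ξ * PhiRate d ξ)) = kInteg d hd α ν 0 := by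
    funext ξ
    unfold kInteg
    rw [add_zero]
  have hgint : ∀ lam : ℝ, 0 ≤ lam →
      Integrable (kInteg d hd α ν lam) (volume.restrict (unitBox d)) := by
    intro lam hlam
    refine hg0.mono' (measurable_kInteg d hd α ν lam).aestronglyMeasurable ?_
    filter_upwards [ae_unitBox d] with ξ hξ
    rw [Real.norm_of_nonneg (kInteg_nonneg hd hα hν hlam hξ.2)]
    exact kInteg_mono hd hα hν le_rfl hlam hξ.2
  have hkappa : ∀ lam : ℝ, kappaLam d hd α ν lam
      = ∫ ξ, kInteg d hd α ν lam ξ ∂(volume.restrict (unitBox d)) := fun lam => rfl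
  refine ⟨?_, ?_, ?_⟩
  · rw [hfun]; exact hg0
  · intro a ha b hb hab
    rw [hkappa, hkappa]
    refine integral_mono_ae (hgint b (le_of_lt hb)) (hgint a (le_of_lt ha)) ?_
    filter_upwards [ae_unitBox d] with ξ hξ
    exact kInteg_mono hd hα hν (le_of_lt ha) hab hξ.2
  · have htarget : (∫ ξ in unitBox d,
        (4 * π * α * Real.sin (2 * π * ξ ⟨0, hd⟩)) ^ 2 /
          (omegaSq d α ν ξ * PhiRate d ξ)) =
        ∫ ξ, kInteg d hd α ν 0 ξ ∂(volume.restrict (unitBox d)) := by rw [hfun]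
    rw [htarget]
    have hconv : Tendsto (fun lam => ∫ ξ, kInteg d hd α ν lam ξ ∂(volume.restrict (unitBox d)))
        (𝓝[>] 0)
        (𝓝 (∫ ξ, kInteg d hd α ν 0 ξ ∂(volume.restrict (unitBox d)))) := by
      apply tendsto_integral_filter_of_dominated_convergence (kInteg d hd α ν 0)
      · exact Filter.Eventually.of_forall fun lam =>
          (measurable_kInteg d hd α ν lam).aestronglyMeasurable
      · filter_upwards [self_mem_nhdsWithin] with lam hlam
        filter_upwards [ae_unitBox d] with ξ hξ
        rw [Real.norm_of_nonneg (kInteg_nonneg hd hα hν (le_of_lt hlam) hξ.2)]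
        exact kInteg_mono hd hα hν le_rfl (le_of_lt hlam) hξ.2
      · exact hg0
      · filter_upwards [ae_unitBox d] with ξ hξ
        have hω := omegaSq_pos hd hα hν hξ.2
        have hΦ := phiRate_pos hd hξ.2
        simp only [kInteg]
        have hD : Tendsto (fun lam : ℝ => omegaSq d α ν ξ * (PhiRate d ξ + lam)) (𝓝[>] 0)
            (𝓝 (omegaSq d α ν ξ * (PhiRate d ξ + 0))) :=
          ((tendsto_const_nhds.add tendsto_id).const_mul _).mono_left nhdsWithin_le_nhds
        have hDne : omegaSq d α ν ξ * (PhiRate d ξ + 0) ≠ 0 := by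
          rw [add_zero]; exact (mul_pos hω hΦ).ne'
        exact tendsto_const_nhds.div hD hDne
    exact hconv
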